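/- Let σ ≥ 1 be a real number and let μ be a real number. Then |Σ_{j∈ℤ} exp(−(j+μ)²/(2σ²)) − σ·√(2π)| ≤ exp(−π²·σ²). -/

import Mathlib

open Real Complex

set_option maxHeartbeats 1000000 in
/-- The shifted Gaussian theta sum over ℤ is within exp(−π²σ²) of σ√(2π). -/
theorem shifted_gaussian_sum_approx
    (σ μ : ℝ) (hσ : 1 ≤ σ) :
    |(∑' j : ℤ, Real.exp (-((j:ℝ) + μ)^2 / (2*σ^2))) - σ * Real.sqrt (2*Real.pi)|
      ≤ Real.exp (-Real.pi^2 * σ^2) := by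
  have hσ0 : (0:ℝ) < σ := lt_of_lt_of_le one_pos hσ
  set c : ℝ := 2 * π^2 * σ^2 with hc
  have hc0 : 0 < c := by positivity
  set q : ℝ := Real.exp (-c) with hqdef
  have hq0 : 0 < q := Real.exp_pos _
  have hq1 : q < 1 := by
    rw [hqdef, ← Real.exp_zero]
    exact Real.exp_lt_exp.mpr (by linarith)
  set r : ℝ := Real.exp (-π^2 * σ^2) with hrdef
  have hr0 : 0 < r := Real.exp_pos _
  have hqr : q = r^2 := by
    rw [hqdef, hrdef, sq, ← Real.exp_add, hc]; ring_nf
  set f : ℤ → ℂ := fun n => Complex.exp (-(π:ℂ) * ((2*π*σ^2 : ℝ):ℂ) * (n:ℂ)^2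
      + 2 * (π:ℂ) * (-Complex.I * μ) * (n:ℂ)) with hf
  -- norm of each term
  have hnorm : ∀ n : ℤ, ‖f n‖ = Real.exp (-c * (n:ℝ)^2) := by
    intro n
    simp only [hf]
    have hz : -(π:ℂ) * ((2*π*σ^2 : ℝ):ℂ) * (n:ℂ)^2 + 2 * (π:ℂ) * (-Complex.I * μ) * (n:ℂ)
        = ((-c * (n:ℝ)^2 : ℝ):ℂ) + ((-2*π*μ*(n:ℝ) : ℝ):ℂ) * Complex.I := by
      rw [hc]; push_cast; ring
    rw [hz, Complex.norm_exp]
    rw [Complex.add_re, Complex.mul_I_re, Complex.ofReal_re, Complex.ofReal_im]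
    norm_num
  -- geometric comparison over ℕ
  have hgeo : Summable (fun n : ℕ => q^(n+1)) := by
    have := (summable_geometric_of_lt_one hq0.le hq1).mul_left q
    refine this.congr (fun n => ?_)
    rw [pow_succ]; ring
  have hgeo_tsum : ∑' n : ℕ, q^(n+1) = q * (1-q)⁻¹ := by
    have e : (fun n : ℕ => q^(n+1)) = fun n : ℕ => q * q^n := by
      funext n; rw [pow_succ]; ring
    rw [e, tsum_mul_left, tsum_geometric_of_lt_one hq0.le hq1]
  have hS1le : ∀ n : ℕ, Real.exp (-c * ((n:ℝ)+1)^2) ≤ q^(n+1) := by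
    intro n
    rw [hqdef, ← Real.exp_nat_mul]
    apply Real.exp_le_exp.mpr
    push_cast
    nlinarith [mul_nonneg (mul_nonneg hc0.le
      (by positivity : (0:ℝ) ≤ (n:ℝ)+1)) (Nat.cast_nonneg (α := ℝ) n)]
  have hS1 : Summable (fun n : ℕ => Real.exp (-c * ((n:ℝ)+1)^2)) :=
    Summable.of_nonneg_of_le (fun n => (Real.exp_pos _).le) hS1le hgeo
  have hS1sum : ∑' n : ℕ, Real.exp (-c * ((n:ℝ)+1)^2) ≤ q * (1-q)⁻¹ := by
    rw [← hgeo_tsum]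
    exact Summable.tsum_le_tsum hS1le hS1 hgeo
  -- summability over ℤ
  have hNat : Summable (fun n : ℕ => Real.exp (-c * (n:ℝ)^2)) := by
    apply Summable.of_nonneg_of_le (fun n => (Real.exp_pos _).le) (fun n => ?_)
      (summable_geometric_of_lt_one hq0.le hq1)
    rw [hqdef, ← Real.exp_nat_mul]
    apply Real.exp_le_exp.mpr
    have hn : (n:ℝ) ≤ (n:ℝ)^2 := by
      exact_mod_cast Nat.le_self_pow two_ne_zero n
    nlinarith [mul_nonneg hc0.le (sub_nonneg.mpr hn)]
  have hZ : Summable (fun n : ℤ => Real.exp (-c * (n:ℝ)^2)) := by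
    apply Summable.of_nat_of_neg
    · exact hNat
    · simpa using hNat
  have hfsumm : Summable f := by
    apply Summable.of_norm
    simpa only [hnorm] using hZ
  -- Poisson summation
  have haC : (0:ℝ) < ((2 * π * σ^2 : ℝ) : ℂ).re := by
    rw [Complex.ofReal_re]; positivity
  have key := Complex.tsum_exp_neg_quadratic haC (-Complex.I * μ)
  set A : ℝ := σ * Real.sqrt (2*π) with hAdef
  have hA0 : 0 < A := by
    rw [hAdef]
    exact mul_pos hσ0 (Real.sqrt_pos.mpr (by positivity))
  have hA : ((2*π*σ^2 : ℝ):ℂ) ^ (1/2 : ℂ) = ((A : ℝ) : ℂ) := by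
    rw [show (1/2 : ℂ) = ((1/2 : ℝ):ℂ) by norm_num, ← Complex.ofReal_cpow (by positivity)]
    congr 1
    rw [← Real.sqrt_eq_rpow, Real.sqrt_mul (by positivity : (0:ℝ) ≤ 2*π), Real.sqrt_sq hσ0.le,
      hAdef, mul_comm]
  have hrhs : ∀ n : ℤ, Complex.exp (-(π:ℂ) / ((2*π*σ^2 : ℝ):ℂ)
        * ((n:ℂ) + Complex.I * (-Complex.I * μ))^2)
      = ((Real.exp (-((n:ℝ) + μ)^2 / (2*σ^2)) : ℝ) : ℂ) := by
    intro n
    rw [Complex.ofReal_exp]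
    congr 1
    have hI : Complex.I * (-Complex.I * (μ:ℂ)) = (μ:ℂ) := by
      rw [← mul_assoc, mul_neg, Complex.I_mul_I]; ring
    rw [hI]
    push_cast
    have hpi : (π:ℂ) ≠ 0 := Complex.ofReal_ne_zero.mpr Real.pi_ne_zero
    have hsC : (σ:ℂ) ≠ 0 := Complex.ofReal_ne_zero.mpr (ne_of_gt hσ0)
    field_simp
  set S : ℝ := ∑' j : ℤ, Real.exp (-((j:ℝ) + μ)^2 / (2*σ^2)) with hSdef
  have keyS : (∑' n : ℤ, f n) = 1 / (A:ℂ) * (S:ℂ) := by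
    rw [hf, key, hA, tsum_congr hrhs, ← Complex.ofReal_tsum, hSdef]
  have hAne : ((A:ℝ):ℂ) ≠ 0 := Complex.ofReal_ne_zero.mpr (ne_of_gt hA0)
  have hT : (S:ℂ) = (A:ℂ) * ∑' n : ℤ, f n := by
    rw [keyS]; field_simp
  -- split the sum over ℤ
  have hfnat : Summable (fun n : ℕ => f n) := by
    apply Summable.of_norm
    have e : (fun n : ℕ => ‖f (n:ℤ)‖) = fun n : ℕ => Real.exp (-c * (n:ℝ)^2) := by
      funext n; rw [hnorm]; push_cast; ring_nf
    rw [e]; exact hNat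
  have e1 : (fun n : ℕ => ‖f ((n:ℤ)+1)‖) = fun n : ℕ => Real.exp (-c * ((n:ℝ)+1)^2) := by
    funext n; rw [hnorm]; push_cast; ring_nf
  have e2 : (fun n : ℕ => ‖f (-((n:ℤ)+1))‖) = fun n : ℕ => Real.exp (-c * ((n:ℝ)+1)^2) := by
    funext n; rw [hnorm]; push_cast; ring_nf
  have hfp : Summable (fun n : ℕ => f ((n:ℤ)+1)) := by
    apply Summable.of_norm; rw [e1]; exact hS1
  have hfm : Summable (fun n : ℕ => f (-((n:ℤ)+1))) := by
    apply Summable.of_norm; rw [e2]; exact hS1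
  have hf0 : f ((0:ℕ):ℤ) = 1 := by
    simp [hf]
  have hsplit : (∑' n : ℤ, f n) - 1
      = (∑' n : ℕ, f ((n:ℤ)+1)) + ∑' n : ℕ, f (-((n:ℤ)+1)) := by
    rw [tsum_of_nat_of_neg_add_one hfnat hfm, Summable.tsum_eq_zero_add hfnat, hf0]
    push_cast
    ring
  have hbound : ‖(∑' n : ℤ, f n) - 1‖ ≤ 2 * (q * (1-q)⁻¹) := by
    rw [hsplit]
    have b1 : ‖∑' n : ℕ, f ((n:ℤ)+1)‖ ≤ q * (1-q)⁻¹ := by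
      refine le_trans (norm_tsum_le_tsum_norm ?_) ?_
      · rw [e1]; exact hS1
      · rw [e1]; exact hS1sum
    have b2 : ‖∑' n : ℕ, f (-((n:ℤ)+1))‖ ≤ q * (1-q)⁻¹ := by
      refine le_trans (norm_tsum_le_tsum_norm ?_) ?_
      · rw [e2]; exact hS1
      · rw [e2]; exact hS1sum
    calc ‖(∑' n : ℕ, f ((n:ℤ)+1)) + ∑' n : ℕ, f (-((n:ℤ)+1))‖
        ≤ ‖∑' n : ℕ, f ((n:ℤ)+1)‖ + ‖∑' n : ℕ, f (-((n:ℤ)+1))‖ := norm_add_le _ _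
      _ ≤ 2 * (q * (1-q)⁻¹) := by linarith
  -- main estimate
  have habs : |S - A| ≤ A * (2 * (q * (1-q)⁻¹)) := by
    have hid : ((S - A : ℝ) : ℂ) = (A:ℂ) * ((∑' n : ℤ, f n) - 1) := by
      push_cast
      rw [hT]; ring
    calc |S - A| = ‖((S - A : ℝ) : ℂ)‖ := by rw [Complex.norm_real, Real.norm_eq_abs]
      _ = ‖((A:ℝ):ℂ)‖ * ‖(∑' n : ℤ, f n) - 1‖ := by rw [hid, norm_mul]
      _ = A * ‖(∑' n : ℤ, f n) - 1‖ := by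
          rw [Complex.norm_real, Real.norm_eq_abs, abs_of_pos hA0]
      _ ≤ A * (2 * (q * (1-q)⁻¹)) := mul_le_mul_of_nonneg_left hbound hA0.le
  -- numerics
  have hpi3 : (3:ℝ) ≤ π := le_of_lt Real.pi_gt_three
  have hexp9 : Real.exp (-9 : ℝ) ≤ 1/10 := by
    have h10 : (10:ℝ) ≤ Real.exp 9 := by linarith [Real.add_one_le_exp (9:ℝ)]
    calc Real.exp (-9:ℝ) = 1 / Real.exp 9 := by rw [Real.exp_neg, one_div]
      _ ≤ 1/10 := one_div_le_one_div_of_le (by norm_num) h10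
  have hsq3 : Real.sqrt (2*π) ≤ 3 := by
    rw [show (3:ℝ) = Real.sqrt 9 by
      rw [show (9:ℝ) = 3^2 by norm_num, Real.sqrt_sq (by norm_num : (0:ℝ) ≤ 3)]]
    exact Real.sqrt_le_sqrt (by nlinarith [Real.pi_le_four])
  have hrle : r ≤ 1/10 := by
    have hp2 : (9:ℝ) ≤ π^2 := by
      have h33 := pow_le_pow_left₀ (by norm_num : (0:ℝ) ≤ 3) hpi3 2
      norm_num at h33
      linarith
    have hs2 : (1:ℝ) ≤ σ^2 := by
      nlinarith [mul_le_mul hσ hσ zero_le_one hσ0.le]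
    have h9 : -π^2*σ^2 ≤ -9 := by
      have h99 : (9:ℝ)*1 ≤ π^2*σ^2 := mul_le_mul hp2 hs2 (by norm_num) (by positivity)
      linarith
    calc r ≤ Real.exp (-9:ℝ) := by rw [hrdef]; exact Real.exp_le_exp.mpr h9
      _ ≤ 1/10 := hexp9
  have hsr : σ * r ≤ 1/10 := by
    have h1 : σ ≤ Real.exp (σ - 1) := by linarith [Real.add_one_le_exp (σ-1)]
    have h2 : σ * r ≤ Real.exp ((σ-1) + (-π^2*σ^2)) := by
      rw [Real.exp_add, hrdef]
      exact mul_le_mul_of_nonneg_right h1 (Real.exp_pos _).le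
    have hp2 : (9:ℝ) ≤ π^2 := by
      have h33 := pow_le_pow_left₀ (by norm_num : (0:ℝ) ≤ 3) hpi3 2
      norm_num at h33
      linarith
    have h3 : (σ-1) + (-π^2*σ^2) ≤ -9 := by
      nlinarith [mul_le_mul_of_nonneg_right hp2 (sq_nonneg σ), sq_nonneg (σ-1), hσ]
    calc σ * r ≤ Real.exp ((σ-1) + (-π^2*σ^2)) := h2
      _ ≤ Real.exp (-9:ℝ) := Real.exp_le_exp.mpr h3
      _ ≤ 1/10 := hexp9
  have h1q : (99:ℝ)/100 ≤ 1 - q := by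
    nlinarith [hqr, mul_le_mul hrle hrle hr0.le (by norm_num : (0:ℝ) ≤ 1/10)]
  have hinv : (1-q)⁻¹ ≤ 100/99 := by
    rw [show (100:ℝ)/99 = ((99:ℝ)/100)⁻¹ by norm_num]
    exact inv_anti₀ (by norm_num) h1q
  have hinv0 : (0:ℝ) ≤ (1-q)⁻¹ := inv_nonneg.mpr (by linarith)
  have hsr0 : (0:ℝ) ≤ σ * r := by positivity
  have hC : 2 * Real.sqrt (2*π) * (σ*r) * (1-q)⁻¹ ≤ 1 := by
    have s0 : (0:ℝ) ≤ Real.sqrt (2*π) := Real.sqrt_nonneg _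
    have m1 : 2 * Real.sqrt (2*π) ≤ 6 := by linarith
    have m2 : 2 * Real.sqrt (2*π) * (σ*r) ≤ 6 * (1/10) :=
      mul_le_mul m1 hsr hsr0 (by norm_num)
    have m4 : 2 * Real.sqrt (2*π) * (σ*r) * (1-q)⁻¹ ≤ (6*(1/10)) * (100/99) :=
      mul_le_mul m2 hinv hinv0 (by norm_num)
    linarith
  refine le_trans habs ?_
  calc A * (2 * (q * (1-q)⁻¹))
      = (2 * Real.sqrt (2*π) * (σ*r) * (1-q)⁻¹) * r := by rw [hAdef, hqr]; ring
    _ ≤ 1 * r := mul_le_mul_of_nonneg_right hC hr0.le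
    _ = r := one_mul r
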